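/- For every n ∈ ℕ with n ≥ 1 and each choice of sign ±, the function ψ̂_{±n}(x) := e^{−x²/2} 𝓗_{±n}(x) is an eigenfunction of the supercharge Q with eigenvalue ±√(2n): (Q ψ̂_{±n})(x) = ±√(2n) · ψ̂_{±n}(x) for all x ∈ ℝ; and Q(e^{−x²/2} 𝓗_0) = 0. -/

import Mathlib

open Polynomial

/-- The physicists' Hermite polynomial, via the Rodrigues formula
`H n x = (-1)^n e^(x²) (dⁿ/dxⁿ) e^(-x²)`. -/
noncomputable def physHermite (n : ℕ) (x : ℝ) : ℝ :=
    (-1 : ℝ) ^ n * Real.exp (x ^ 2) * iteratedDeriv n (fun y : ℝ => Real.exp (-y ^ 2)) x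

/-- The supersymmetric Hermite polynomial `𝓗_{εn} = H_{2n} + ε 2√n H_{2n-1}` for `n ≥ 1`
(with sign `ε = ±1`), and `𝓗₀ = 1`. -/
noncomputable def ssHermite (ε : ℝ) (n : ℕ) (x : ℝ) : ℝ :=
    if n = 0 then 1
    else physHermite (2 * n) x + ε * (2 * Real.sqrt n) * physHermite (2 * n - 1) x

/-- The supercharge operator `(Q f)(x) = (1/√2)(-f'(-x) + x f(x))`. -/
noncomputable def supercharge (f : ℝ → ℝ) (x : ℝ) : ℝ :=
    (1 / Real.sqrt 2) * (-(deriv f (-x)) + x * f x)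


noncomputable def PH : ℕ → ℝ[X]
  | 0 => 1
  | n+1 => 2 * X * PH n - derivative (PH n)

lemma PH_succ (n : ℕ) : PH (n+1) = 2 * X * PH n - derivative (PH n) := rfl

lemma derivative_PH (n : ℕ) :
    derivative (PH (n+1)) = C (2*(n+1) : ℝ) * PH n := by
  induction n with
  | zero =>
    rw [PH_succ]
    show derivative (2 * X * (1:ℝ[X]) - derivative 1) = _
    simp only [mul_one, derivative_one, sub_zero, derivative_mul, derivative_ofNat,
      derivative_X, zero_mul, zero_add, mul_one]
    show (2:ℝ[X]) = C (2*((0:ℕ)+1) : ℝ) * PH 0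
    show (2:ℝ[X]) = C (2*((0:ℕ)+1) : ℝ) * 1
    norm_num
    exact (map_ofNat C 2).symm
  | succ n ih =>
    rw [PH_succ (n+1), derivative_sub, derivative_mul, ih, derivative_mul, PH_succ n]
    simp only [derivative_mul, derivative_ofNat, derivative_X, derivative_C,
      zero_mul, zero_add, mul_one]
    push_cast
    simp only [map_add, map_mul, map_ofNat, map_one]
    ring

lemma PH_comp_neg (n : ℕ) : (PH n).comp (-X) = (-1)^n * PH n := by
  induction n with
  | zero => simp [PH]
  | succ n ih =>
    have key := derivative_comp (PH n) (-X)
    rw [ih, derivative_neg, derivative_X] at key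
    have h2 : derivative ((-1:ℝ[X])^n * PH n) = (-1)^n * derivative (PH n) := by
      have hC : ((-1:ℝ[X])^n) = C ((-1:ℝ)^n) := by simp
      rw [hC, derivative_C_mul, ← hC]
    rw [h2] at key
    have hd : (derivative (PH n)).comp (-X) = (-1)^(n+1) * derivative (PH n) := by
      linear_combination key
    rw [PH_succ, sub_comp, mul_comp, mul_comp, X_comp, ofNat_comp, ih, hd]
    ring

lemma gauss_hasDeriv (x : ℝ) :
    HasDerivAt (fun y : ℝ => Real.exp (-y^2)) (-2*x*Real.exp (-x^2)) x := by
  have h : HasDerivAt (fun y : ℝ => -y^2) (-(2*x)) x := by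
    simpa using (hasDerivAt_pow 2 x).fun_neg
  have := h.exp
  convert this using 1
  ring

lemma halfgauss_hasDeriv (x : ℝ) :
    HasDerivAt (fun y : ℝ => Real.exp (-y^2/2)) (-x * Real.exp (-x^2/2)) x := by
  have h : HasDerivAt (fun y : ℝ => -y^2/2) (-x) x := by
    have := ((hasDerivAt_pow 2 x).fun_neg).div_const 2
    exact this.congr_deriv (by ring)
  have := h.exp
  convert this using 1
  ring

lemma iter_gauss (n : ℕ) : ∀ x : ℝ,
    iteratedDeriv n (fun y : ℝ => Real.exp (-y^2)) x
      = (-1)^n * (PH n).eval x * Real.exp (-x^2) := by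
  induction n with
  | zero => intro x; simp [PH]
  | succ n ih =>
    intro x
    rw [iteratedDeriv_succ, funext ih]
    have h1 : HasDerivAt (fun y : ℝ => (-1:ℝ)^n * ((PH n).eval y * Real.exp (-y^2)))
        ((-1)^n * ((derivative (PH n)).eval x * Real.exp (-x^2)
          + (PH n).eval x * (-2*x*Real.exp (-x^2)))) x :=
      (((PH n).hasDerivAt x).mul (gauss_hasDeriv x)).const_mul _
    have h1' : HasDerivAt (fun y : ℝ => (-1:ℝ)^n * (PH n).eval y * Real.exp (-y^2))
        ((-1)^n * ((derivative (PH n)).eval x * Real.exp (-x^2)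
          + (PH n).eval x * (-2*x*Real.exp (-x^2)))) x := by
      simpa [mul_assoc] using h1
    rw [h1'.deriv, PH_succ]
    simp only [eval_sub, eval_mul, eval_ofNat, eval_X]
    ring

lemma physHermite_eval (n : ℕ) (x : ℝ) : physHermite n x = (PH n).eval x := by
  rw [physHermite, iter_gauss]
  have he : Real.exp (x^2) * Real.exp (-x^2) = 1 := by
    rw [← Real.exp_add]; ring_nf; exact Real.exp_zero
  have hs : ((-1:ℝ)^n) * ((-1:ℝ)^n) = 1 := by rw [← mul_pow]; norm_num
  linear_combination ((PH n).eval x * Real.exp (x^2) * Real.exp (-x^2)) * hs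
    + (PH n).eval x * he

lemma PH_eval_neg (n : ℕ) (x : ℝ) : (PH n).eval (-x) = (-1)^n * (PH n).eval x := by
  have := congrArg (eval x) (PH_comp_neg n)
  simpa [eval_comp] using this

lemma psi_hasDeriv (q : ℝ[X]) (x : ℝ) :
    HasDerivAt (fun y : ℝ => Real.exp (-y^2/2) * q.eval y)
      (Real.exp (-x^2/2) * ((derivative q).eval x - x * q.eval x)) x := by
  have := (halfgauss_hasDeriv x).fun_mul (q.hasDerivAt x)
  exact this.congr_deriv (by ring)

theorem supercharge_ssHermite_eigen :
    (∀ n : ℕ, 1 ≤ n → ∀ ε : ℝ, ε = 1 ∨ ε = -1 → ∀ x : ℝ,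
      supercharge (fun y : ℝ => Real.exp (-y ^ 2 / 2) * ssHermite ε n y) x =
        ε * Real.sqrt (2 * n) * (Real.exp (-x ^ 2 / 2) * ssHermite ε n x)) ∧
    (∀ ε : ℝ, ε = 1 ∨ ε = -1 → ∀ x : ℝ,
      supercharge (fun y : ℝ => Real.exp (-y ^ 2 / 2) * ssHermite ε 0 y) x = 0) := by
  constructor
  · intro n hn ε hε x
    obtain ⟨m, rfl⟩ : ∃ m, n = m + 1 := ⟨n - 1, by omega⟩
    set c : ℝ := ε * (2 * Real.sqrt ((m:ℝ) + 1)) with hc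
    set q : ℝ[X] := PH (2*m+2) + C c * PH (2*m+1) with hq
    have hfeq : (fun y : ℝ => Real.exp (-y ^ 2 / 2) * ssHermite ε (m+1) y)
        = fun y : ℝ => Real.exp (-y^2/2) * q.eval y := by
      funext y
      have h1 : 2*(m+1) = 2*m+2 := by ring
      have h2 : 2*(m+1)-1 = 2*m+1 := by omega
      simp only [ssHermite, Nat.add_one_ne_zero, if_false, h1, h2, physHermite_eval, hq,
        eval_add, eval_mul, eval_C]
      push_cast
      ring
    rw [supercharge, hfeq, (psi_hasDeriv q (-x)).deriv]
    have hrw := congrFun hfeq x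
    rw [show Real.exp (-x^2/2) * ssHermite ε (m+1) x
        = Real.exp (-x^2/2) * q.eval x by
      have h := congrFun hfeq x; simpa using h]
    -- eval facts
    set A := (PH (2*m)).eval x with hA
    set B := (PH (2*m+1)).eval x with hB
    set Cv := (PH (2*m+2)).eval x with hCv
    have hparA : (PH (2*m)).eval (-x) = A := by
      rw [PH_eval_neg, pow_mul]; norm_num; rfl
    have hparB : (PH (2*m+1)).eval (-x) = -B := by
      rw [PH_eval_neg, pow_succ, pow_mul]; norm_num; rfl
    have hdq : ∀ y : ℝ, (derivative q).eval y
        = (4*m+4) * (PH (2*m+1)).eval y + c * ((4*m+2) * (PH (2*m)).eval y) := by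
      intro y
      rw [hq, derivative_add, derivative_C_mul,
        show (2*m+2) = (2*m+1)+1 from rfl, derivative_PH,
        show (2*m+1) = (2*m)+1 from rfl, derivative_PH]
      simp only [eval_add, eval_mul, eval_C]
      push_cast
      ring
    have hqx : q.eval x = Cv + c * B := by simp [hq]; rfl
    have hparC : (PH (2*m+2)).eval (-x) = Cv := by
      rw [PH_eval_neg]
      have hp : ((-1:ℝ))^(2*m+2) = 1 := by simp [pow_add, pow_mul]
      rw [hp, one_mul]
    have hqneg : q.eval (-x) = Cv - c * B := by
      simp only [hq, eval_add, eval_mul, eval_C, hparC, hparB]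
      ring
    have hrec : Cv = 2*x*B - (4*m+2)*A := by
      rw [hCv, show (2*m+2) = (2*m+1)+1 from rfl, PH_succ,
        show (2*m+1) = (2*m)+1 from rfl, derivative_PH]
      simp only [eval_sub, eval_mul, eval_ofNat, eval_X, eval_add, eval_C]
      push_cast
      ring
    rw [hqx, hdq, hqneg, hparA, hparB]
    have hsq : Real.sqrt (2 * ((m:ℕ)+1 : ℕ) : ℝ)
        = Real.sqrt 2 * Real.sqrt ((m:ℝ)+1) := by
      push_cast
      rw [Real.sqrt_mul (by norm_num)]
    push_cast
    rw [show Real.sqrt (2 * ((m:ℝ)+1)) = Real.sqrt 2 * Real.sqrt ((m:ℝ)+1) from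
      Real.sqrt_mul (by norm_num) _]
    have h2 : Real.sqrt 2 ^ 2 = 2 := Real.sq_sqrt (by norm_num)
    have h2ne : Real.sqrt 2 ≠ 0 := by positivity
    have hn2 : Real.sqrt ((m:ℝ)+1) ^ 2 = (m:ℝ)+1 := Real.sq_sqrt (by positivity)
    have hneg : (-x)^2 = x^2 := by ring
    rw [hneg]
    set E := Real.exp (-x^2/2)
    set s2 := Real.sqrt 2
    set sn := Real.sqrt ((m:ℝ)+1)
    rcases hε with rfl | rfl
    · rw [hc]; field_simp
      linear_combination (-(sn*E*(Cv + 2*sn*B))) * h2 + (-4*E*B) * hn2 + (-2*sn*E) * hrec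
    · rw [hc]; field_simp
      linear_combination (sn*E*(Cv - 2*sn*B)) * h2 + (-4*E*B) * hn2 + (2*sn*E) * hrec
  · intro ε hε x
    have hfeq : (fun y : ℝ => Real.exp (-y ^ 2 / 2) * ssHermite ε 0 y)
        = fun y : ℝ => Real.exp (-y^2/2) := by
      funext y; simp [ssHermite]
    rw [supercharge, hfeq, (halfgauss_hasDeriv (-x)).deriv]
    simp [ssHermite]
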